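/- For 1 < p ≤ 2 there exists a constant c > 0 such that for all a, b in ℝⁿ, ⟪‖a‖^(p-2)a − ‖b‖^(p-2)b, a − b⟫ ≥ c · ‖a − b‖² · (‖a‖ + ‖b‖)^(p-2), where the right-hand side is interpreted as 0 when a = b = 0. -/

import Mathlib

open Real Classical

private lemma tangent {q A B : ℝ} (hq0 : 0 < q) (hq1 : q ≤ 1) (hA : 0 < A) (hB : 0 < B) :
    B ^ q ≤ A ^ q + q * A ^ (q - 1) * (B - A) := by
  have hBA : (0:ℝ) < B / A := by positivity
  have h1 : (1 + (B / A - 1)) ^ q ≤ 1 + q * (B / A - 1) :=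
    rpow_one_add_le_one_add_mul_self (by linarith) hq0.le hq1
  have h2 : B ^ q = A ^ q * (B / A) ^ q := by
    rw [← Real.mul_rpow hA.le hBA.le, mul_div_cancel₀ _ hA.ne']
  have h3 : A ^ (q - 1) = A ^ q / A := by
    rw [Real.rpow_sub hA, Real.rpow_one]
  have h4 : (1 : ℝ) + (B / A - 1) = B / A := by ring
  rw [h4] at h1
  rw [h2, h3]
  have h5 : A ^ q * (B / A) ^ q ≤ A ^ q * (1 + q * (B / A - 1)) :=
    mul_le_mul_of_nonneg_left h1 (Real.rpow_nonneg hA.le q)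
  calc A ^ q * (B / A) ^ q ≤ A ^ q * (1 + q * (B / A - 1)) := h5
    _ = A ^ q + q * (A ^ q / A) * (B - A) := by field_simp

private lemma e1core {p A B : ℝ} (hp1 : 1 < p) (hp2 : p ≤ 2) (hA : 0 < A) (hB : 0 < B)
    (hBA : B ≤ A) : (p - 1) * (A + B) ^ (p - 2) * (A - B) ≤ A ^ (p - 1) - B ^ (p - 1) := by
  have ht := tangent (q := p - 1) (by linarith) (by linarith) hA hB
  have hexp : p - 1 - 1 = p - 2 := by ring
  rw [hexp] at ht
  have hZ : (A + B) ^ (p - 2) ≤ A ^ (p - 2) :=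
    Real.rpow_le_rpow_of_nonpos hA (by linarith) (by linarith)
  nlinarith [mul_le_mul_of_nonneg_right hZ (mul_nonneg (by linarith : (0:ℝ) ≤ p - 1) (by linarith : (0:ℝ) ≤ A - B))]

private lemma e1 {p A B : ℝ} (hp1 : 1 < p) (hp2 : p ≤ 2) (hA : 0 < A) (hB : 0 < B) :
    (p - 1) * (A + B) ^ (p - 2) * (A - B) ^ 2 ≤ (A ^ (p - 1) - B ^ (p - 1)) * (A - B) := by
  rcases le_total B A with h | h
  · nlinarith [mul_le_mul_of_nonneg_right (e1core hp1 hp2 hA hB h) (by linarith : (0:ℝ) ≤ A - B)]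
  · have h2 := mul_le_mul_of_nonneg_right (e1core hp1 hp2 hB hA h) (by linarith : (0:ℝ) ≤ B - A)
    rw [show B + A = A + B from add_comm B A] at h2
    nlinarith [h2]

private lemma subadd {q A B : ℝ} (hq0 : 0 < q) (hq1 : q ≤ 1) (hA : 0 < A) (hB : 0 < B) :
    (A + B) ^ q ≤ A ^ q + B ^ q := by
  have h := NNReal.rpow_add_le_add_rpow (Real.toNNReal A) (Real.toNNReal B) hq0.le hq1
  have h2 := NNReal.coe_le_coe.2 h
  push_cast [NNReal.coe_rpow, Real.coe_toNNReal _ hA.le, Real.coe_toNNReal _ hB.le] at h2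
  exact h2

private lemma e2 {p A B : ℝ} (hp1 : 1 < p) (hp2 : p ≤ 2) (hA : 0 < A) (hB : 0 < B) :
    (p - 1) * (A + B) ^ (p - 2) * (A + B) ^ 2 ≤ (A ^ (p - 1) + B ^ (p - 1)) * (A + B) := by
  have hAB : (0:ℝ) < A + B := by linarith
  have hsub : (A + B) ^ (p - 1) ≤ A ^ (p - 1) + B ^ (p - 1) :=
    subadd (by linarith) (by linarith) hA hB
  have hid : (A + B) ^ (p - 2) * (A + B) = (A + B) ^ (p - 1) := by
    have h := (Real.rpow_add_one hAB.ne' (p-2)).symm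
    rw [show p - 2 + 1 = p - 1 by ring] at h; exact h
  have h1 : (p - 1) * ((A + B) ^ (p - 2) * (A + B)) ≤ A ^ (p - 1) + B ^ (p - 1) := by
    rw [hid]
    nlinarith [Real.rpow_pos_of_pos hAB (p - 1)]
  nlinarith [mul_le_mul_of_nonneg_right h1 hAB.le]

private lemma key {p A B t : ℝ} (hp1 : 1 < p) (hp2 : p ≤ 2) (hA : 0 < A) (hB : 0 < B)
    (ht : |t| ≤ A * B) :
    (p - 1) * (A * A + B * B - 2 * t) * (A + B) ^ (p - 2) ≤
      A ^ (p - 2) * (A * A) + B ^ (p - 2) * (B * B) - (A ^ (p - 2) + B ^ (p - 2)) * t := by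
  obtain ⟨ht1, ht2⟩ := abs_le.mp ht
  have hXA : A ^ (p - 1) = A ^ (p - 2) * A := by
    rw [show p - 1 = p - 2 + 1 by ring, Real.rpow_add_one hA.ne']
  have hYB : B ^ (p - 1) = B ^ (p - 2) * B := by
    rw [show p - 1 = p - 2 + 1 by ring, Real.rpow_add_one hB.ne']
  have he1 := e1 hp1 hp2 hA hB
  have he2 := e2 hp1 hp2 hA hB
  rw [hXA, hYB] at he1 he2
  set X := A ^ (p - 2)
  set Y := B ^ (p - 2)
  set Z := (A + B) ^ (p - 2)
  -- D(AB) ≥ 0 and D(-AB) ≥ 0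
  have hD1 : 0 ≤ X * (A * A) + Y * (B * B) - (X + Y) * (A * B) - (p - 1) * (A * A + B * B - 2 * (A * B)) * Z := by nlinarith [he1]
  have hD2 : 0 ≤ X * (A * A) + Y * (B * B) + (X + Y) * (A * B) - (p - 1) * (A * A + B * B + 2 * (A * B)) * Z := by nlinarith [he2]
  nlinarith [mul_nonneg (by linarith : (0:ℝ) ≤ A * B - t) hD2,
    mul_nonneg (by linarith : (0:ℝ) ≤ A * B + t) hD1, mul_pos hA hB]

theorem stmt_2 (n : ℕ) (p : ℝ) (hp1 : 1 < p) (hp2 : p ≤ 2)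
    (F : EuclideanSpace ℝ (Fin n) → EuclideanSpace ℝ (Fin n))
    (hF : ∀ a, F a = if a = 0 then 0 else ‖a‖ ^ (p - 2) • a) :
    ∃ c : ℝ, 0 < c ∧ ∀ a b : EuclideanSpace ℝ (Fin n),
      (inner ℝ (F a - F b) (a - b) : ℝ) ≥
        (if a = 0 ∧ b = 0 then 0
         else c * ‖a - b‖ ^ 2 * (‖a‖ + ‖b‖) ^ (p - 2)) := by
  refine ⟨p - 1, by linarith, fun a b => ?_⟩
  by_cases ha : a = 0 <;> by_cases hb : b = 0
  · subst ha; subst hb; simp [hF]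
  · subst ha
    rw [hF, hF, if_pos rfl, if_neg hb, if_neg (by simp [hb])]
    rw [zero_sub, zero_sub, inner_neg_neg, real_inner_smul_left,
      real_inner_self_eq_norm_sq, norm_neg, norm_zero, zero_add]
    have hb' : 0 < ‖b‖ := norm_pos_iff.mpr hb
    have h1 : 0 < ‖b‖ ^ (p - 2) := Real.rpow_pos_of_pos hb' _
    nlinarith [sq_nonneg ‖b‖, mul_pos h1 (mul_pos hb' hb')]
  · subst hb
    rw [hF, hF, if_pos rfl, if_neg ha, if_neg (by simp [ha])]
    rw [sub_zero, sub_zero, real_inner_smul_left,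
      real_inner_self_eq_norm_sq, norm_zero, add_zero]
    have ha' : 0 < ‖a‖ := norm_pos_iff.mpr ha
    have h1 : 0 < ‖a‖ ^ (p - 2) := Real.rpow_pos_of_pos ha' _
    nlinarith [sq_nonneg ‖a‖, mul_pos h1 (mul_pos ha' ha')]
  · rw [hF, hF, if_neg ha, if_neg hb, if_neg (by simp [ha])]
    have ha' : 0 < ‖a‖ := norm_pos_iff.mpr ha
    have hb' : 0 < ‖b‖ := norm_pos_iff.mpr hb
    have hk := key (t := (inner ℝ a b : ℝ)) hp1 hp2 ha' hb' (abs_real_inner_le_norm a b)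
    have hexp : (inner ℝ (‖a‖ ^ (p - 2) • a - ‖b‖ ^ (p - 2) • b) (a - b) : ℝ)
        = ‖a‖ ^ (p - 2) * (‖a‖ * ‖a‖) + ‖b‖ ^ (p - 2) * (‖b‖ * ‖b‖)
          - (‖a‖ ^ (p - 2) + ‖b‖ ^ (p - 2)) * (inner ℝ a b : ℝ) := by
      rw [inner_sub_left, inner_sub_right, inner_sub_right, real_inner_smul_left,
        real_inner_smul_left, real_inner_smul_left, real_inner_smul_left,
        real_inner_self_eq_norm_sq, real_inner_self_eq_norm_sq, real_inner_comm b a]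
      ring
    have hns : ‖a - b‖ ^ 2 = ‖a‖ * ‖a‖ + ‖b‖ * ‖b‖ - 2 * (inner ℝ a b : ℝ) := by
      rw [@norm_sub_sq_real]; ring
    rw [ge_iff_le, hexp, hns]
    nlinarith [hk]
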